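/- Variance reduction for stratified ΔEx (ΔExS ≤ ΔExA): let q be an SMM in difference representation where additionally q₊ = Σ_{k=1}^{K₊} α₊_k q₊_k and q₋ = Σ_{j=1}^{K₋} α₋_j q₋_j are themselves additive mixtures of probability densities (α₊_k, α₋_j ≥ 0 summing to 1 in each mixture), let p, f, w be as in the importance-sampling setup with ∫ (f w)² q₊ dμ < ∞ and ∫ (f w)² q₋ dμ < ∞, and fix sample sizes S₊, S₋ such that α₊_k·S₊ and α₋_j·S₋ are positive integers. Let Î_ΔExA be the ΔEx estimator formed with S₊ i.i.d. samples from q₊·μ and S₋ i.i.d. samples from q₋·μ, and let Î_ΔExS be the ΔEx estimator in which samples from q₊ and q₋ are replaced by stratified samples drawing exactly α₊_k·S₊ samples from each q₊_k·μ and α₋_j·S₋ samples from each q₋_j·μ, all samples jointly independent and the within-mixture averages replaced by the correspondingly weighted stratified averages. Then Var[Î_ΔExS] ≤ Var[Î_ΔExA]. -/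

import Mathlib

open MeasureTheory ProbabilityTheory Filter

open scoped NNReal ENNReal

section Aux

variable {ι : Type*} [Fintype ι] {α : ι → Type*} [∀ i, MeasurableSpace (α i)]

lemma aux_map_eval_pi (ν : ∀ i, Measure (α i)) [∀ i, IsProbabilityMeasure (ν i)] (i : ι) :
    (Measure.pi ν).map (Function.eval i) = ν i := by
  classical
  refine Measure.ext fun s hs => ?_
  rw [Measure.map_apply (measurable_pi_apply i) hs, Set.eval_preimage, Measure.pi_pi]
  rw [Fintype.prod_eq_single i (fun j hj => by simp [Function.update_of_ne hj])]
  simp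

lemma aux_measurePreserving_eval (ν : ∀ i, Measure (α i)) [∀ i, IsProbabilityMeasure (ν i)]
    (i : ι) : MeasurePreserving (Function.eval i) (Measure.pi ν) (ν i) :=
  ⟨measurable_pi_apply i, aux_map_eval_pi ν i⟩

lemma aux_iIndepFun_eval (ν : ∀ i, Measure (α i)) [∀ i, IsProbabilityMeasure (ν i)] :
    iIndepFun (fun i (ω : ∀ j, α j) => ω i) (Measure.pi ν) := by
  classical
  rw [iIndepFun_iff_measure_inter_preimage_eq_mul]
  intro S sets hsets
  have h1 : (⋂ i ∈ S, (fun ω : ∀ j, α j => ω i) ⁻¹' sets i)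
      = Set.pi Set.univ (fun i => if i ∈ S then sets i else Set.univ) := by
    ext ω
    simp only [Set.mem_iInter, Set.mem_preimage, Set.mem_pi, Set.mem_univ, true_implies]
    refine ⟨fun h i => ?_, fun h i hi => ?_⟩
    · by_cases hi : i ∈ S <;> simp [hi, h]
    · simpa [hi] using h i
  rw [h1, Measure.pi_pi]
  have h2 : ∀ i, ν i (if i ∈ S then sets i else Set.univ)
      = if i ∈ S then ν i (sets i) else 1 := by
    intro i; by_cases hi : i ∈ S <;> simp [hi]
  simp_rw [h2]
  rw [Finset.prod_ite_mem Finset.univ S fun i => ν i (sets i), Finset.univ_inter]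
  refine Finset.prod_congr rfl fun i hi => ?_
  rw [← aux_map_eval_pi ν i, Measure.map_apply (measurable_pi_apply i) (hsets i hi)]


end Aux

section Aux2

lemma aux_isProbabilityMeasure_of_measurePreserving {Ω Ω' : Type*} [MeasurableSpace Ω]
    [MeasurableSpace Ω'] {P : Measure Ω} {P' : Measure Ω'} [IsProbabilityMeasure P']
    {T : Ω → Ω'} (hT : MeasurePreserving T P P') : IsProbabilityMeasure P := by
  constructor
  have : P (T ⁻¹' Set.univ) = 1 := by
    rw [← Measure.map_apply hT.measurable MeasurableSet.univ, hT.map_eq, measure_univ]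
  simpa using this

lemma aux_variance_comp {Ω Ω' : Type*} [MeasurableSpace Ω] [MeasurableSpace Ω']
    {P : Measure Ω} {P' : Measure Ω'} [IsProbabilityMeasure P']
    {T : Ω → Ω'} (hT : MeasurePreserving T P P')
    {g : Ω' → ℝ} (hg : MemLp g 2 P') :
    variance (fun ω => g (T ω)) P = variance g P' := by
  have hP : IsProbabilityMeasure P := aux_isProbabilityMeasure_of_measurePreserving hT
  have hgT : MemLp (fun ω => g (T ω)) 2 P := hg.comp_measurePreserving hT
  rw [variance_eq_sub hgT, variance_eq_sub hg]
  have h1 : ∫ ω, ((fun ω => g (T ω)) ^ 2) ω ∂P = ∫ x, (g ^ 2) x ∂P' := by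
    simp only [Pi.pow_apply]
    rw [← hT.map_eq, integral_map hT.measurable.aemeasurable]
    · rw [hT.map_eq]
      exact (hg.aestronglyMeasurable.pow 2)
  have h2 : ∫ ω, g (T ω) ∂P = ∫ x, g x ∂P' := by
    rw [← hT.map_eq, integral_map hT.measurable.aemeasurable]
    rw [hT.map_eq]; exact hg.aestronglyMeasurable
  rw [h1, h2]

end Aux2

section Aux3

variable {ι : Type*} [Fintype ι] {α : ι → Type*} [∀ i, MeasurableSpace (α i)]

lemma aux_variance_pi_sum (ν : ∀ i, Measure (α i)) [∀ i, IsProbabilityMeasure (ν i)]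
    (g : ∀ i, α i → ℝ) (hgm : ∀ i, Measurable (g i)) (hg : ∀ i, MemLp (g i) 2 (ν i)) :
    variance (fun ω => ∑ i, g i (ω i)) (Measure.pi ν) = ∑ i, variance (g i) (ν i) := by
  have hcomp : ∀ i, MemLp (fun ω : ∀ j, α j => g i (ω i)) 2 (Measure.pi ν) :=
    fun i => (hg i).comp_measurePreserving (aux_measurePreserving_eval ν i)
  have hindep : iIndepFun (fun i (ω : ∀ j, α j) => g i (ω i))
      (Measure.pi ν) := (aux_iIndepFun_eval ν).comp g hgm
  have hpair : Set.Pairwise ↑(Finset.univ : Finset ι)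
      (fun i j => IndepFun (fun ω : ∀ j, α j => g i (ω i)) (fun ω => g j (ω j))
        (Measure.pi ν)) := fun i _ j _ hij => hindep.indepFun hij
  have hsum := IndepFun.variance_sum (fun i _ => hcomp i) hpair
  have heq : (fun ω : ∀ j, α j => ∑ i, g i (ω i))
      = ∑ i : ι, (fun ω : ∀ j, α j => g i (ω i)) := by
    funext ω; simp [Finset.sum_apply]
  rw [heq, hsum]
  exact Finset.sum_congr rfl fun i _ =>
    aux_variance_comp (aux_measurePreserving_eval ν i) (hg i)

end Aux3

section Aux4

lemma aux_variance_sub_prod {Ω₁ Ω₂ : Type*} [MeasurableSpace Ω₁] [MeasurableSpace Ω₂]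
    (P : Measure Ω₁) (Q : Measure Ω₂) [IsProbabilityMeasure P] [IsProbabilityMeasure Q]
    {F : Ω₁ → ℝ} {G : Ω₂ → ℝ} (hFm : Measurable F) (hGm : Measurable G)
    (hF : MemLp F 2 P) (hG : MemLp G 2 Q) :
    variance (fun ω : Ω₁ × Ω₂ => F ω.1 - G ω.2) (P.prod Q)
      = variance F P + variance G Q := by
  have hfst : MeasurePreserving (Prod.fst) (P.prod Q) P :=
    ⟨measurable_fst, by simp [Measure.map_fst_prod]⟩
  have hsnd : MeasurePreserving (Prod.snd) (P.prod Q) Q :=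
    ⟨measurable_snd, by simp [Measure.map_snd_prod]⟩
  have hind0 : IndepFun (Prod.fst : Ω₁ × Ω₂ → Ω₁) Prod.snd (P.prod Q) := by
    rw [indepFun_iff_map_prod_eq_prod_map_map measurable_fst.aemeasurable
      measurable_snd.aemeasurable]
    have : (fun ω : Ω₁ × Ω₂ => (ω.1, ω.2)) = id := by funext ω; rfl
    rw [this, Measure.map_id, Measure.map_fst_prod, Measure.map_snd_prod]
    simp
  have hind : IndepFun (fun ω : Ω₁ × Ω₂ => F ω.1) (fun ω => -G ω.2) (P.prod Q) :=
    hind0.comp hFm hGm.neg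
  have hFc : MemLp (fun ω : Ω₁ × Ω₂ => F ω.1) 2 (P.prod Q) :=
    hF.comp_measurePreserving hfst
  have hGc : MemLp (fun ω : Ω₁ × Ω₂ => -G ω.2) 2 (P.prod Q) :=
    (hG.comp_measurePreserving hsnd).neg
  have h := IndepFun.variance_add hFc hGc hind
  have heq : (fun ω : Ω₁ × Ω₂ => F ω.1 - G ω.2)
      = (fun ω : Ω₁ × Ω₂ => F ω.1) + fun ω => -G ω.2 := by
    funext ω; simp [sub_eq_add_neg]
  rw [heq, h, aux_variance_comp hfst hF]
  congr 1
  have h2 : (fun ω : Ω₁ × Ω₂ => -G ω.2) = fun ω => (-1 : ℝ) * G ω.2 := by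
    funext ω; ring
  rw [h2, variance_const_mul, aux_variance_comp hsnd hG]
  ring

end Aux4

section Aux5

variable {X : Type*} [MeasurableSpace X] {μ : Measure X}

lemma aux_integral_withDensity {ρ : X → ℝ} (hρm : Measurable ρ) (hρ0 : ∀ x, 0 ≤ ρ x)
    (g : X → ℝ) :
    ∫ x, g x ∂(μ.withDensity fun x => ENNReal.ofReal (ρ x)) = ∫ x, g x * ρ x ∂μ := by
  have h : (fun x => ENNReal.ofReal (ρ x)) = fun x => ((Real.toNNReal (ρ x) : ℝ≥0) : ℝ≥0∞) := rfl
  rw [h, integral_withDensity_eq_integral_smul hρm.real_toNNReal]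
  congr 1; funext x
  simp [NNReal.smul_def, Real.coe_toNNReal _ (hρ0 x), mul_comm]

lemma aux_integrable_withDensity {ρ : X → ℝ} (hρm : Measurable ρ) (hρ0 : ∀ x, 0 ≤ ρ x)
    {g : X → ℝ} :
    Integrable g (μ.withDensity fun x => ENNReal.ofReal (ρ x))
      ↔ Integrable (fun x => g x * ρ x) μ := by
  rw [integrable_withDensity_iff hρm.ennreal_ofReal
    (Filter.Eventually.of_forall fun x => ENNReal.ofReal_lt_top)]
  have : (fun x => g x * (ENNReal.ofReal (ρ x)).toReal) = fun x => g x * ρ x := by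
    funext x; rw [ENNReal.toReal_ofReal (hρ0 x)]
  rw [this]

lemma aux_isProbability_withDensity {ρ : X → ℝ} (hρ0 : ∀ x, 0 ≤ ρ x)
    (h1 : ∫ x, ρ x ∂μ = 1) :
    IsProbabilityMeasure (μ.withDensity fun x => ENNReal.ofReal (ρ x)) := by
  have hint : Integrable ρ μ := by
    by_contra h; rw [integral_undef h] at h1; norm_num at h1
  constructor
  rw [withDensity_apply _ MeasurableSet.univ, setLIntegral_univ,
    ← ofReal_integral_eq_lintegral_ofReal hint (Filter.Eventually.of_forall hρ0), h1]
  simp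

lemma aux_memℒp_withDensity {ρ : X → ℝ} (hρm : Measurable ρ) (hρ0 : ∀ x, 0 ≤ ρ x)
    {g : X → ℝ} (hgm : Measurable g)
    (hint : Integrable (fun x => g x ^ 2 * ρ x) μ) :
    MemLp g 2 (μ.withDensity fun x => ENNReal.ofReal (ρ x)) := by
  rw [memLp_two_iff_integrable_sq
    (hgm.aestronglyMeasurable (μ := μ.withDensity fun x => ENNReal.ofReal (ρ x)))]
  rw [aux_integrable_withDensity hρm hρ0]
  exact hint

lemma aux_variance_withDensity {ρ : X → ℝ} (hρm : Measurable ρ) (hρ0 : ∀ x, 0 ≤ ρ x)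
    (h1 : ∫ x, ρ x ∂μ = 1) {g : X → ℝ} (hgm : Measurable g)
    (hint : Integrable (fun x => g x ^ 2 * ρ x) μ) :
    variance g (μ.withDensity fun x => ENNReal.ofReal (ρ x))
      = ∫ x, g x ^ 2 * ρ x ∂μ - (∫ x, g x * ρ x ∂μ) ^ 2 := by
  have hP := aux_isProbability_withDensity hρ0 h1
  rw [variance_eq_sub (aux_memℒp_withDensity hρm hρ0 hgm hint)]
  have h2 : ∫ x, (g ^ 2) x ∂(μ.withDensity fun x => ENNReal.ofReal (ρ x))
      = ∫ x, g x ^ 2 * ρ x ∂μ := by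
    rw [show (g ^ 2 : X → ℝ) = fun x => g x ^ 2 from rfl, aux_integral_withDensity hρm hρ0]
  rw [h2, aux_integral_withDensity hρm hρ0]

lemma aux_memℒp_sum {n : ℕ} {ν : Measure X} [IsProbabilityMeasure ν] {g : X → ℝ}
    (hg : MemLp g 2 ν) :
    MemLp (fun v : Fin n → X => ∑ s, g (v s)) 2 (Measure.pi fun _ : Fin n => ν) := by
  have heq : (fun v : Fin n → X => ∑ s, g (v s))
      = ∑ s : Fin n, fun v : Fin n → X => g (v s) := by
    funext v; simp
  rw [heq]
  exact memLp_finset_sum' _ fun s _ =>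
    hg.comp_measurePreserving (aux_measurePreserving_eval (fun _ : Fin n => ν) s)

lemma aux_variance_iid_sum {n : ℕ} (ν : Measure X) [IsProbabilityMeasure ν] {g : X → ℝ}
    (hgm : Measurable g) (hg : MemLp g 2 ν) :
    variance (fun v : Fin n → X => ∑ s, g (v s)) (Measure.pi fun _ : Fin n => ν)
      = n * variance g ν := by
  rw [aux_variance_pi_sum (fun _ : Fin n => ν) (fun _ => g) (fun _ => hgm) (fun _ => hg)]
  simp

lemma aux_variance_strat {K : ℕ} (ν : Fin K → Measure X) [∀ k, IsProbabilityMeasure (ν k)]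
    (Sk : Fin K → ℕ) (c : Fin K → ℝ) {g : X → ℝ} (hgm : Measurable g)
    (hg : ∀ k, MemLp g 2 (ν k)) :
    variance (fun ω : ∀ k, Fin (Sk k) → X => ∑ k, c k * ∑ s, g (ω k s))
      (Measure.pi fun k => Measure.pi fun _ : Fin (Sk k) => ν k)
      = ∑ k, c k ^ 2 * (Sk k : ℝ) * variance g (ν k) := by
  have hGm : ∀ k, Measurable (fun v : Fin (Sk k) → X => c k * ∑ s, g (v s)) := fun k =>
    (Finset.measurable_sum _ fun s _ => hgm.comp (measurable_pi_apply s)).const_mul (c k)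
  have hGp : ∀ k, MemLp (fun v : Fin (Sk k) → X => c k * ∑ s, g (v s)) 2
      (Measure.pi fun _ : Fin (Sk k) => ν k) := fun k => (aux_memℒp_sum (hg k)).const_mul (c k)
  rw [aux_variance_pi_sum _ _ hGm hGp]
  refine Finset.sum_congr rfl fun k _ => ?_
  rw [variance_const_mul (c k) (fun v : Fin (Sk k) → X => ∑ s, g (v s)),
    aux_variance_iid_sum (ν k) hgm (hg k)]
  ring

end Aux5

set_option maxHeartbeats 2000000 in
/-- **Variance reduction for stratified ΔEx (ΔExS ≤ ΔExA).**
Let `q = Z_q⁻¹(Z₊ q₊ − Z₋ q₋)` be an SMM in difference representation where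
`q₊ = Σ_k α₊_k q₊_k` and `q₋ = Σ_j α₋_j q₋_j` are additive mixtures, let `w = p/q` be
the importance weight with `∫(fw)² q₊ dμ < ∞` and `∫(fw)² q₋ dμ < ∞`, and let
`α₊_k·S₊` and `α₋_j·S₋` be positive integers. Then the stratified ΔEx estimator
(`ΔExS`, drawing exactly `α₊_k·S₊` samples from each `q₊_k·μ` and `α₋_j·S₋` from each
`q₋_j·μ`, all jointly independent) has variance at most that of the ancestral ΔEx
estimator (`ΔExA`, with `S₊` i.i.d. samples from `q₊·μ` and `S₋` from `q₋·μ`). -/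
theorem deltaExS_variance_le_deltaExA
    {X : Type*} [MeasurableSpace X] (μ : Measure X)
    (qp qm q : X → ℝ) (Zp Zm : ℝ)
    (hqp_meas : Measurable qp) (hqm_meas : Measurable qm)
    (hqp_nonneg : ∀ x, 0 ≤ qp x) (hqm_nonneg : ∀ x, 0 ≤ qm x)
    (hqp_int : ∫ x, qp x ∂μ = 1) (hqm_int : ∫ x, qm x ∂μ = 1)
    (hZp : 0 < Zp) (hZm : 0 ≤ Zm) (hZq : 0 < Zp - Zm)
    (hq_def : ∀ x, q x = (Zp - Zm)⁻¹ * (Zp * qp x - Zm * qm x))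
    (hq_nonneg : ∀ᵐ x ∂μ, 0 ≤ q x)
    -- mixture structure of `q₊` and `q₋`
    (Kp Km : ℕ) (hKp : 1 ≤ Kp) (hKm : 1 ≤ Km)
    (qpk : Fin Kp → X → ℝ) (αp : Fin Kp → ℝ)
    (qmk : Fin Km → X → ℝ) (αm : Fin Km → ℝ)
    (hqpk_meas : ∀ k, Measurable (qpk k)) (hqpk_nonneg : ∀ k x, 0 ≤ qpk k x)
    (hqpk_int : ∀ k, ∫ x, qpk k x ∂μ = 1)
    (hqmk_meas : ∀ j, Measurable (qmk j)) (hqmk_nonneg : ∀ j x, 0 ≤ qmk j x)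
    (hqmk_int : ∀ j, ∫ x, qmk j x ∂μ = 1)
    (hαp_nonneg : ∀ k, 0 ≤ αp k) (hαp_sum : ∑ k, αp k = 1)
    (hαm_nonneg : ∀ j, 0 ≤ αm j) (hαm_sum : ∑ j, αm j = 1)
    (hqp_mix : ∀ x, qp x = ∑ k, αp k * qpk k x)
    (hqm_mix : ∀ x, qm x = ∑ j, αm j * qmk j x)
    -- importance-sampling setup
    (p f w : X → ℝ)
    (hp_meas : Measurable p) (hp_nonneg : ∀ x, 0 ≤ p x) (hp_int : ∫ x, p x ∂μ = 1)
    (hf_meas : Measurable f)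
    (hf_int : Integrable (fun x => |f x| * p x) μ)
    (habs : ∀ᵐ x ∂μ, q x = 0 → p x = 0)
    (hw_def : ∀ x, w x = if 0 < q x then p x / q x else 0)
    (hfw2_qp : Integrable (fun x => (f x * w x) ^ 2 * qp x) μ)
    (hfw2_qm : Integrable (fun x => (f x * w x) ^ 2 * qm x) μ)
    -- sample sizes and proportional stratified allocation
    (Sp Sm : ℕ) (hSp : 1 ≤ Sp) (hSm : 1 ≤ Sm)
    (Spk : Fin Kp → ℕ) (Smk : Fin Km → ℕ)
    (hSpk_pos : ∀ k, 1 ≤ Spk k) (hSmk_pos : ∀ j, 1 ≤ Smk j)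
    (hSpk_def : ∀ k, (Spk k : ℝ) = αp k * Sp)
    (hSmk_def : ∀ j, (Smk j : ℝ) = αm j * Sm) :
    variance
      (fun ω : (∀ k : Fin Kp, Fin (Spk k) → X) × (∀ j : Fin Km, Fin (Smk j) → X) =>
        (Zp / (Zp - Zm))
            * ∑ k, αp k / (Spk k : ℝ) * ∑ s : Fin (Spk k), f (ω.1 k s) * w (ω.1 k s)
          - (Zm / (Zp - Zm))
            * ∑ j, αm j / (Smk j : ℝ) * ∑ s : Fin (Smk j), f (ω.2 j s) * w (ω.2 j s))
      ((Measure.pi fun k =>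
          Measure.pi fun _ : Fin (Spk k) =>
            μ.withDensity fun x => ENNReal.ofReal (qpk k x)).prod
        (Measure.pi fun j =>
          Measure.pi fun _ : Fin (Smk j) =>
            μ.withDensity fun x => ENNReal.ofReal (qmk j x)))
    ≤ variance
        (fun ω : (Fin Sp → X) × (Fin Sm → X) =>
          (Zp / (Zp - Zm)) * (Sp : ℝ)⁻¹ * ∑ s : Fin Sp, f (ω.1 s) * w (ω.1 s)
            - (Zm / (Zp - Zm)) * (Sm : ℝ)⁻¹ * ∑ s : Fin Sm, f (ω.2 s) * w (ω.2 s))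
        ((Measure.pi fun _ : Fin Sp =>
            μ.withDensity fun x => ENNReal.ofReal (qp x)).prod
          (Measure.pi fun _ : Fin Sm =>
            μ.withDensity fun x => ENNReal.ofReal (qm x))) := by
 classical
  -- basic measurability
  have hq_meas : Measurable q := by
    have h : q = fun x => (Zp - Zm)⁻¹ * (Zp * qp x - Zm * qm x) := funext hq_def
    rw [h]
    exact (((measurable_const.mul hqp_meas).sub
      (measurable_const.mul hqm_meas)).const_mul _)
  have hw_meas : Measurable w := by
    have h : w = fun x => if 0 < q x then p x / q x else 0 := funext hw_def
    rw [h]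
    exact Measurable.ite (measurableSet_lt measurable_const hq_meas)
      (hp_meas.div hq_meas) measurable_const
  set g : X → ℝ := fun x => f x * w x with hg_def
  have hgm : Measurable g := hf_meas.mul hw_meas
  -- positivity of weights and sizes
  have hSp_pos : (0:ℝ) < Sp := by exact_mod_cast hSp
  have hSm_pos : (0:ℝ) < Sm := by exact_mod_cast hSm
  have hαp_pos : ∀ k, 0 < αp k := by
    intro k
    have h1 : (1:ℝ) ≤ αp k * Sp := by rw [← hSpk_def k]; exact_mod_cast hSpk_pos k
    nlinarith
  have hαm_pos : ∀ j, 0 < αm j := by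
    intro j
    have h1 : (1:ℝ) ≤ αm j * Sm := by rw [← hSmk_def j]; exact_mod_cast hSmk_pos j
    nlinarith
  have hSpk_posR : ∀ k, (0:ℝ) < Spk k := fun k => by
    rw [hSpk_def k]; exact mul_pos (hαp_pos k) hSp_pos
  have hSmk_posR : ∀ j, (0:ℝ) < Smk j := fun j => by
    rw [hSmk_def j]; exact mul_pos (hαm_pos j) hSm_pos
  -- integrability of squared integrand against component densities
  have hint2pk : ∀ k, Integrable (fun x => g x ^ 2 * qpk k x) μ := by
    intro k
    refine Integrable.mono' (hfw2_qp.const_mul (αp k)⁻¹)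
      (((hgm.pow_const 2).mul (hqpk_meas k)).aestronglyMeasurable)
      (Filter.Eventually.of_forall fun x => ?_)
    rw [Real.norm_eq_abs, abs_of_nonneg (mul_nonneg (sq_nonneg _) (hqpk_nonneg k x))]
    have h1 : αp k * qpk k x ≤ qp x := by
      rw [hqp_mix x]
      exact Finset.single_le_sum
        (fun j _ => mul_nonneg (hαp_nonneg j) (hqpk_nonneg j x)) (Finset.mem_univ k)
    have h2 : qpk k x ≤ (αp k)⁻¹ * qp x := by
      rw [le_inv_mul_iff₀ (hαp_pos k)]; linarith
    have h3 : (0:ℝ) ≤ g x ^ 2 := sq_nonneg _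
    calc g x ^ 2 * qpk k x ≤ g x ^ 2 * ((αp k)⁻¹ * qp x) := by
          exact mul_le_mul_of_nonneg_left h2 h3
      _ = (αp k)⁻¹ * ((f x * w x) ^ 2 * qp x) := by rw [hg_def]; ring
  have hint2mk : ∀ j, Integrable (fun x => g x ^ 2 * qmk j x) μ := by
    intro j
    refine Integrable.mono' (hfw2_qm.const_mul (αm j)⁻¹)
      (((hgm.pow_const 2).mul (hqmk_meas j)).aestronglyMeasurable)
      (Filter.Eventually.of_forall fun x => ?_)
    rw [Real.norm_eq_abs, abs_of_nonneg (mul_nonneg (sq_nonneg _) (hqmk_nonneg j x))]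
    have h1 : αm j * qmk j x ≤ qm x := by
      rw [hqm_mix x]
      exact Finset.single_le_sum
        (fun i _ => mul_nonneg (hαm_nonneg i) (hqmk_nonneg i x)) (Finset.mem_univ j)
    have h2 : qmk j x ≤ (αm j)⁻¹ * qm x := by
      rw [le_inv_mul_iff₀ (hαm_pos j)]; linarith
    have h3 : (0:ℝ) ≤ g x ^ 2 := sq_nonneg _
    calc g x ^ 2 * qmk j x ≤ g x ^ 2 * ((αm j)⁻¹ * qm x) := by
          exact mul_le_mul_of_nonneg_left h2 h3
      _ = (αm j)⁻¹ * ((f x * w x) ^ 2 * qm x) := by rw [hg_def]; ring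
  have hfw2_qp' : Integrable (fun x => g x ^ 2 * qp x) μ := hfw2_qp
  have hfw2_qm' : Integrable (fun x => g x ^ 2 * qm x) μ := hfw2_qm
  -- probability measures
  haveI hPp : IsProbabilityMeasure (μ.withDensity fun x => ENNReal.ofReal (qp x)) :=
    aux_isProbability_withDensity hqp_nonneg hqp_int
  haveI hPm : IsProbabilityMeasure (μ.withDensity fun x => ENNReal.ofReal (qm x)) :=
    aux_isProbability_withDensity hqm_nonneg hqm_int
  haveI hPpk : ∀ k, IsProbabilityMeasure (μ.withDensity fun x => ENNReal.ofReal (qpk k x)) :=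
    fun k => aux_isProbability_withDensity (hqpk_nonneg k) (hqpk_int k)
  haveI hPmk : ∀ j, IsProbabilityMeasure (μ.withDensity fun x => ENNReal.ofReal (qmk j x)) :=
    fun j => aux_isProbability_withDensity (hqmk_nonneg j) (hqmk_int j)
  -- MemLp
  have hMp : MemLp g 2 (μ.withDensity fun x => ENNReal.ofReal (qp x)) :=
    aux_memℒp_withDensity hqp_meas hqp_nonneg hgm hfw2_qp'
  have hMm : MemLp g 2 (μ.withDensity fun x => ENNReal.ofReal (qm x)) :=
    aux_memℒp_withDensity hqm_meas hqm_nonneg hgm hfw2_qm'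
  have hMpk : ∀ k, MemLp g 2 (μ.withDensity fun x => ENNReal.ofReal (qpk k x)) :=
    fun k => aux_memℒp_withDensity (hqpk_meas k) (hqpk_nonneg k) hgm (hint2pk k)
  have hMmk : ∀ j, MemLp g 2 (μ.withDensity fun x => ENNReal.ofReal (qmk j x)) :=
    fun j => aux_memℒp_withDensity (hqmk_meas j) (hqmk_nonneg j) hgm (hint2mk j)
  -- shorthand
  set A := Zp / (Zp - Zm) with hA
  set B := Zm / (Zp - Zm) with hB
  -- measures
  set νp : Measure X := μ.withDensity fun x => ENNReal.ofReal (qp x) with hνp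
  set νm : Measure X := μ.withDensity fun x => ENNReal.ofReal (qm x) with hνm
  set νpk : Fin Kp → Measure X :=
    fun k => μ.withDensity fun x => ENNReal.ofReal (qpk k x) with hνpk
  set νmk : Fin Km → Measure X :=
    fun j => μ.withDensity fun x => ENNReal.ofReal (qmk j x) with hνmk
  haveI : IsProbabilityMeasure νp := hPp
  haveI : IsProbabilityMeasure νm := hPm
  haveI : ∀ k, IsProbabilityMeasure (νpk k) := hPpk
  haveI : ∀ j, IsProbabilityMeasure (νmk j) := hPmk
  -- STRATIFIED side: measurability and MemLp of the two block functions
  have hFm : Measurable (fun v : ∀ k : Fin Kp, Fin (Spk k) → X =>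
      A * ∑ k, αp k / (Spk k : ℝ) * ∑ s, g (v k s)) := by
    refine Measurable.const_mul (Finset.measurable_sum _ fun k _ => ?_) A
    exact (Finset.measurable_sum _ fun s _ =>
      hgm.comp ((measurable_pi_apply s).comp (measurable_pi_apply k))).const_mul _
  have hGm : Measurable (fun v : ∀ j : Fin Km, Fin (Smk j) → X =>
      B * ∑ j, αm j / (Smk j : ℝ) * ∑ s, g (v j s)) := by
    refine Measurable.const_mul (Finset.measurable_sum _ fun j _ => ?_) B
    exact (Finset.measurable_sum _ fun s _ =>
      hgm.comp ((measurable_pi_apply s).comp (measurable_pi_apply j))).const_mul _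
  have hF : MemLp (fun v : ∀ k : Fin Kp, Fin (Spk k) → X =>
      A * ∑ k, αp k / (Spk k : ℝ) * ∑ s, g (v k s)) 2
      (Measure.pi fun k => Measure.pi fun _ : Fin (Spk k) => νpk k) := by
    refine MemLp.const_mul ?_ A
    have heq : (fun v : ∀ k : Fin Kp, Fin (Spk k) → X =>
        ∑ k, αp k / (Spk k : ℝ) * ∑ s, g (v k s))
        = ∑ k : Fin Kp, fun v : ∀ k : Fin Kp, Fin (Spk k) → X =>
            αp k / (Spk k : ℝ) * ∑ s, g (v k s) := by
      funext v; simp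
    rw [heq]
    exact memLp_finset_sum' _ fun k _ =>
      ((aux_memℒp_sum (hMpk k)).const_mul _).comp_measurePreserving
        (aux_measurePreserving_eval _ k)
  have hG : MemLp (fun v : ∀ j : Fin Km, Fin (Smk j) → X =>
      B * ∑ j, αm j / (Smk j : ℝ) * ∑ s, g (v j s)) 2
      (Measure.pi fun j => Measure.pi fun _ : Fin (Smk j) => νmk j) := by
    refine MemLp.const_mul ?_ B
    have heq : (fun v : ∀ j : Fin Km, Fin (Smk j) → X =>
        ∑ j, αm j / (Smk j : ℝ) * ∑ s, g (v j s))
        = ∑ j : Fin Km, fun v : ∀ j : Fin Km, Fin (Smk j) → X =>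
            αm j / (Smk j : ℝ) * ∑ s, g (v j s) := by
      funext v; simp
    rw [heq]
    exact memLp_finset_sum' _ fun j _ =>
      ((aux_memℒp_sum (hMmk j)).const_mul _).comp_measurePreserving
        (aux_measurePreserving_eval _ j)
  -- ANCESTRAL side functions
  have hFm' : Measurable (fun v : Fin Sp → X => A * (Sp : ℝ)⁻¹ * ∑ s, g (v s)) :=
    (Finset.measurable_sum _ fun s _ => hgm.comp (measurable_pi_apply s)).const_mul _
  have hGm' : Measurable (fun v : Fin Sm → X => B * (Sm : ℝ)⁻¹ * ∑ s, g (v s)) :=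
    (Finset.measurable_sum _ fun s _ => hgm.comp (measurable_pi_apply s)).const_mul _
  have hF' : MemLp (fun v : Fin Sp → X => A * (Sp : ℝ)⁻¹ * ∑ s, g (v s)) 2
      (Measure.pi fun _ : Fin Sp => νp) := (aux_memℒp_sum hMp).const_mul _
  have hG' : MemLp (fun v : Fin Sm → X => B * (Sm : ℝ)⁻¹ * ∑ s, g (v s)) 2
      (Measure.pi fun _ : Fin Sm => νm) := (aux_memℒp_sum hMm).const_mul _
  -- variance of the stratified estimator
  have hVstrat : variance
      (fun ω : (∀ k : Fin Kp, Fin (Spk k) → X) × (∀ j : Fin Km, Fin (Smk j) → X) =>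
        A * ∑ k, αp k / (Spk k : ℝ) * ∑ s : Fin (Spk k), g (ω.1 k s)
          - B * ∑ j, αm j / (Smk j : ℝ) * ∑ s : Fin (Smk j), g (ω.2 j s))
      ((Measure.pi fun k => Measure.pi fun _ : Fin (Spk k) => νpk k).prod
        (Measure.pi fun j => Measure.pi fun _ : Fin (Smk j) => νmk j))
      = A ^ 2 * ∑ k, (αp k / (Spk k : ℝ)) ^ 2 * (Spk k : ℝ) * variance g (νpk k)
        + B ^ 2 * ∑ j, (αm j / (Smk j : ℝ)) ^ 2 * (Smk j : ℝ) * variance g (νmk j) := by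
    rw [aux_variance_sub_prod _ _ hFm hGm hF hG]
    congr 1
    · rw [variance_const_mul A _ _, aux_variance_strat νpk Spk (fun k => αp k / (Spk k : ℝ)) hgm hMpk]
    · rw [variance_const_mul B _ _, aux_variance_strat νmk Smk (fun j => αm j / (Smk j : ℝ)) hgm hMmk]
  -- variance of the ancestral estimator
  have hVanc : variance
      (fun ω : (Fin Sp → X) × (Fin Sm → X) =>
        A * (Sp : ℝ)⁻¹ * ∑ s : Fin Sp, g (ω.1 s) - B * (Sm : ℝ)⁻¹ * ∑ s : Fin Sm, g (ω.2 s))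
      ((Measure.pi fun _ : Fin Sp => νp).prod (Measure.pi fun _ : Fin Sm => νm))
      = (A * (Sp : ℝ)⁻¹) ^ 2 * ((Sp : ℝ) * variance g νp)
        + (B * (Sm : ℝ)⁻¹) ^ 2 * ((Sm : ℝ) * variance g νm) := by
    rw [aux_variance_sub_prod _ _ hFm' hGm' hF' hG']
    congr 1
    · rw [variance_const_mul (A * (Sp : ℝ)⁻¹) _ _, aux_variance_iid_sum νp hgm hMp]
    · rw [variance_const_mul (B * (Sm : ℝ)⁻¹) _ _, aux_variance_iid_sum νm hgm hMm]
  -- rewrite the goal in terms of `g`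
  have hgx : ∀ x, f x * w x = g x := fun x => by rw [hg_def]
  simp only [hgx]
  -- integrability of `g·ρ` for component densities
  have hqpk_intg : ∀ k, Integrable (qpk k) μ := by
    intro k; by_contra h
    have h1 := hqpk_int k
    rw [integral_undef h] at h1
    norm_num at h1
  have hqmk_intg : ∀ j, Integrable (qmk j) μ := by
    intro j; by_contra h
    have h1 := hqmk_int j
    rw [integral_undef h] at h1
    norm_num at h1
  have hint1pk : ∀ k, Integrable (fun x => g x * qpk k x) μ := by
    intro k
    refine Integrable.mono' (((hint2pk k).add (hqpk_intg k)).const_mul (1/2))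
      ((hgm.mul (hqpk_meas k)).aestronglyMeasurable)
      (Filter.Eventually.of_forall fun x => ?_)
    rw [Real.norm_eq_abs, abs_mul, abs_of_nonneg (hqpk_nonneg k x)]
    have h0 := hqpk_nonneg k x
    have h1 : |g x| ≤ (g x ^ 2 + 1) / 2 := by
      nlinarith [sq_nonneg (|g x| - 1), sq_abs (g x)]
    calc |g x| * qpk k x ≤ (g x ^ 2 + 1) / 2 * qpk k x := mul_le_mul_of_nonneg_right h1 h0
      _ = 1 / 2 * (g x ^ 2 * qpk k x + qpk k x) := by ring
  have hint1mk : ∀ j, Integrable (fun x => g x * qmk j x) μ := by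
    intro j
    refine Integrable.mono' (((hint2mk j).add (hqmk_intg j)).const_mul (1/2))
      ((hgm.mul (hqmk_meas j)).aestronglyMeasurable)
      (Filter.Eventually.of_forall fun x => ?_)
    rw [Real.norm_eq_abs, abs_mul, abs_of_nonneg (hqmk_nonneg j x)]
    have h0 := hqmk_nonneg j x
    have h1 : |g x| ≤ (g x ^ 2 + 1) / 2 := by
      nlinarith [sq_nonneg (|g x| - 1), sq_abs (g x)]
    calc |g x| * qmk j x ≤ (g x ^ 2 + 1) / 2 * qmk j x := mul_le_mul_of_nonneg_right h1 h0
      _ = 1 / 2 * (g x ^ 2 * qmk j x + qmk j x) := by ring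
  -- mixture decompositions of moments
  have hM_p : ∫ x, g x ^ 2 * qp x ∂μ = ∑ k, αp k * ∫ x, g x ^ 2 * qpk k x ∂μ := by
    calc ∫ x, g x ^ 2 * qp x ∂μ = ∫ x, ∑ k, αp k * (g x ^ 2 * qpk k x) ∂μ := by
          congr 1; funext x; rw [hqp_mix x, Finset.mul_sum]
          exact Finset.sum_congr rfl fun k _ => by ring
      _ = ∑ k, ∫ x, αp k * (g x ^ 2 * qpk k x) ∂μ :=
          integral_finset_sum _ fun k _ => (hint2pk k).const_mul _
      _ = ∑ k, αp k * ∫ x, g x ^ 2 * qpk k x ∂μ := by simp_rw [integral_const_mul]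
  have hm_p : ∫ x, g x * qp x ∂μ = ∑ k, αp k * ∫ x, g x * qpk k x ∂μ := by
    calc ∫ x, g x * qp x ∂μ = ∫ x, ∑ k, αp k * (g x * qpk k x) ∂μ := by
          congr 1; funext x; rw [hqp_mix x, Finset.mul_sum]
          exact Finset.sum_congr rfl fun k _ => by ring
      _ = ∑ k, ∫ x, αp k * (g x * qpk k x) ∂μ :=
          integral_finset_sum _ fun k _ => (hint1pk k).const_mul _
      _ = ∑ k, αp k * ∫ x, g x * qpk k x ∂μ := by simp_rw [integral_const_mul]
  have hM_m : ∫ x, g x ^ 2 * qm x ∂μ = ∑ j, αm j * ∫ x, g x ^ 2 * qmk j x ∂μ := by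
    calc ∫ x, g x ^ 2 * qm x ∂μ = ∫ x, ∑ j, αm j * (g x ^ 2 * qmk j x) ∂μ := by
          congr 1; funext x; rw [hqm_mix x, Finset.mul_sum]
          exact Finset.sum_congr rfl fun j _ => by ring
      _ = ∑ j, ∫ x, αm j * (g x ^ 2 * qmk j x) ∂μ :=
          integral_finset_sum _ fun j _ => (hint2mk j).const_mul _
      _ = ∑ j, αm j * ∫ x, g x ^ 2 * qmk j x ∂μ := by simp_rw [integral_const_mul]
  have hm_m : ∫ x, g x * qm x ∂μ = ∑ j, αm j * ∫ x, g x * qmk j x ∂μ := by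
    calc ∫ x, g x * qm x ∂μ = ∫ x, ∑ j, αm j * (g x * qmk j x) ∂μ := by
          congr 1; funext x; rw [hqm_mix x, Finset.mul_sum]
          exact Finset.sum_congr rfl fun j _ => by ring
      _ = ∑ j, ∫ x, αm j * (g x * qmk j x) ∂μ :=
          integral_finset_sum _ fun j _ => (hint1mk j).const_mul _
      _ = ∑ j, αm j * ∫ x, g x * qmk j x ∂μ := by simp_rw [integral_const_mul]
  -- the key Jensen-type inequalities
  have key_p : ∑ k, αp k * variance g (νpk k) ≤ variance g νp := by
    have hVp : variance g νp = ∫ x, g x ^ 2 * qp x ∂μ - (∫ x, g x * qp x ∂μ) ^ 2 :=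
      aux_variance_withDensity hqp_meas hqp_nonneg hqp_int hgm hfw2_qp'
    have hVk : ∀ k, variance g (νpk k)
        = ∫ x, g x ^ 2 * qpk k x ∂μ - (∫ x, g x * qpk k x ∂μ) ^ 2 := fun k =>
      aux_variance_withDensity (hqpk_meas k) (hqpk_nonneg k) (hqpk_int k) hgm (hint2pk k)
    have hCS : (∑ k, αp k * ∫ x, g x * qpk k x ∂μ) ^ 2
        ≤ ∑ k, αp k * (∫ x, g x * qpk k x ∂μ) ^ 2 := by
      have h := Finset.sum_mul_sq_le_sq_mul_sq Finset.univ
        (fun k => Real.sqrt (αp k)) (fun k => Real.sqrt (αp k) * ∫ x, g x * qpk k x ∂μ)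
      have e1 : ∀ k ∈ Finset.univ, Real.sqrt (αp k) * (Real.sqrt (αp k) * ∫ x, g x * qpk k x ∂μ)
          = αp k * ∫ x, g x * qpk k x ∂μ := fun k _ => by
        rw [← mul_assoc, Real.mul_self_sqrt (hαp_nonneg k)]
      have e2 : ∀ k ∈ Finset.univ, (Real.sqrt (αp k)) ^ 2 = αp k := fun k _ =>
        Real.sq_sqrt (hαp_nonneg k)
      have e3 : ∀ k ∈ Finset.univ, (Real.sqrt (αp k) * ∫ x, g x * qpk k x ∂μ) ^ 2
          = αp k * (∫ x, g x * qpk k x ∂μ) ^ 2 := fun k hk => by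
        rw [mul_pow, e2 k hk]
      rw [Finset.sum_congr rfl e1, Finset.sum_congr rfl e2, Finset.sum_congr rfl e3,
        hαp_sum, one_mul] at h
      exact h
    calc ∑ k, αp k * variance g (νpk k)
        = ∑ k, αp k * ∫ x, g x ^ 2 * qpk k x ∂μ
            - ∑ k, αp k * (∫ x, g x * qpk k x ∂μ) ^ 2 := by
          rw [← Finset.sum_sub_distrib]
          exact Finset.sum_congr rfl fun k _ => by rw [hVk k]; ring
      _ ≤ ∑ k, αp k * ∫ x, g x ^ 2 * qpk k x ∂μ
            - (∑ k, αp k * ∫ x, g x * qpk k x ∂μ) ^ 2 := by linarith [hCS]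
      _ = variance g νp := by rw [hVp, hM_p, hm_p]
  have key_m : ∑ j, αm j * variance g (νmk j) ≤ variance g νm := by
    have hVm : variance g νm = ∫ x, g x ^ 2 * qm x ∂μ - (∫ x, g x * qm x ∂μ) ^ 2 :=
      aux_variance_withDensity hqm_meas hqm_nonneg hqm_int hgm hfw2_qm'
    have hVk : ∀ j, variance g (νmk j)
        = ∫ x, g x ^ 2 * qmk j x ∂μ - (∫ x, g x * qmk j x ∂μ) ^ 2 := fun j =>
      aux_variance_withDensity (hqmk_meas j) (hqmk_nonneg j) (hqmk_int j) hgm (hint2mk j)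
    have hCS : (∑ j, αm j * ∫ x, g x * qmk j x ∂μ) ^ 2
        ≤ ∑ j, αm j * (∫ x, g x * qmk j x ∂μ) ^ 2 := by
      have h := Finset.sum_mul_sq_le_sq_mul_sq Finset.univ
        (fun j => Real.sqrt (αm j)) (fun j => Real.sqrt (αm j) * ∫ x, g x * qmk j x ∂μ)
      have e1 : ∀ j ∈ Finset.univ, Real.sqrt (αm j) * (Real.sqrt (αm j) * ∫ x, g x * qmk j x ∂μ)
          = αm j * ∫ x, g x * qmk j x ∂μ := fun j _ => by
        rw [← mul_assoc, Real.mul_self_sqrt (hαm_nonneg j)]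
      have e2 : ∀ j ∈ Finset.univ, (Real.sqrt (αm j)) ^ 2 = αm j := fun j _ =>
        Real.sq_sqrt (hαm_nonneg j)
      have e3 : ∀ j ∈ Finset.univ, (Real.sqrt (αm j) * ∫ x, g x * qmk j x ∂μ) ^ 2
          = αm j * (∫ x, g x * qmk j x ∂μ) ^ 2 := fun j hj => by
        rw [mul_pow, e2 j hj]
      rw [Finset.sum_congr rfl e1, Finset.sum_congr rfl e2, Finset.sum_congr rfl e3,
        hαm_sum, one_mul] at h
      exact h
    calc ∑ j, αm j * variance g (νmk j)
        = ∑ j, αm j * ∫ x, g x ^ 2 * qmk j x ∂μ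
            - ∑ j, αm j * (∫ x, g x * qmk j x ∂μ) ^ 2 := by
          rw [← Finset.sum_sub_distrib]
          exact Finset.sum_congr rfl fun j _ => by rw [hVk j]; ring
      _ ≤ ∑ j, αm j * ∫ x, g x ^ 2 * qmk j x ∂μ
            - (∑ j, αm j * ∫ x, g x * qmk j x ∂μ) ^ 2 := by linarith [hCS]
      _ = variance g νm := by rw [hVm, hM_m, hm_m]
  -- coefficient algebra
  have hcoef_p : ∀ k, (αp k / (Spk k : ℝ)) ^ 2 * (Spk k : ℝ) = (Sp : ℝ)⁻¹ * αp k := by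
    intro k
    have h1 : αp k ≠ 0 := (hαp_pos k).ne'
    have h2 : (Sp : ℝ) ≠ 0 := hSp_pos.ne'
    rw [hSpk_def k]
    field_simp
  have hcoef_m : ∀ j, (αm j / (Smk j : ℝ)) ^ 2 * (Smk j : ℝ) = (Sm : ℝ)⁻¹ * αm j := by
    intro j
    have h1 : αm j ≠ 0 := (hαm_pos j).ne'
    have h2 : (Sm : ℝ) ≠ 0 := hSm_pos.ne'
    rw [hSmk_def j]
    field_simp
  -- put everything together
  rw [hVstrat, hVanc]
  have hs1 : ∑ k, (αp k / (Spk k : ℝ)) ^ 2 * (Spk k : ℝ) * variance g (νpk k)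
      = (Sp : ℝ)⁻¹ * ∑ k, αp k * variance g (νpk k) := by
    rw [Finset.mul_sum]
    exact Finset.sum_congr rfl fun k _ => by rw [hcoef_p k]; ring
  have hs2 : ∑ j, (αm j / (Smk j : ℝ)) ^ 2 * (Smk j : ℝ) * variance g (νmk j)
      = (Sm : ℝ)⁻¹ * ∑ j, αm j * variance g (νmk j) := by
    rw [Finset.mul_sum]
    exact Finset.sum_congr rfl fun j _ => by rw [hcoef_m j]; ring
  rw [hs1, hs2]
  have hr1 : (A * (Sp : ℝ)⁻¹) ^ 2 * ((Sp : ℝ) * variance g νp)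
      = A ^ 2 * ((Sp : ℝ)⁻¹ * variance g νp) := by
    have h2 : (Sp : ℝ) ≠ 0 := hSp_pos.ne'
    field_simp
  have hr2 : (B * (Sm : ℝ)⁻¹) ^ 2 * ((Sm : ℝ) * variance g νm)
      = B ^ 2 * ((Sm : ℝ)⁻¹ * variance g νm) := by
    have h2 : (Sm : ℝ) ≠ 0 := hSm_pos.ne'
    field_simp
  rw [hr1, hr2]
  have hA2 : (0:ℝ) ≤ A ^ 2 := sq_nonneg _
  have hB2 : (0:ℝ) ≤ B ^ 2 := sq_nonneg _
  have hSpinv : (0:ℝ) ≤ (Sp : ℝ)⁻¹ := by positivity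
  have hSminv : (0:ℝ) ≤ (Sm : ℝ)⁻¹ := by positivity
  gcongr
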